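/- arXiv:1105.0745 — 4 statements merged into one kernel-verified Lean document; each statement's English description precedes it below -/
import Mathlib

section
/- Let (Ω,𝓕,P) be a probability space with a filtration 𝔽 = (𝓕_s)_{s∈[0,T]}, let t ∈ [0,T], let ξ : Ω → ℝ be integrable and 𝓕_T-measurable, and let m ∈ ℝ. Then E[ξ] ≤ m if and only if there exists a martingale M = (M_s)_{s∈[t,T]} with respect to 𝔽 and P such that E[M_s] = m for every s ∈ [t,T] and M_T ≥ ξ P-almost surely. -/
open MeasureTheory Set

/-- **Lemma 2.2.** Let `(Ω,𝓕,P)` be a probability space with a filtration `𝓕 = (𝓕ₛ)_{s∈[0,T]}`,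
`t ∈ [0,T]`, `ξ` integrable and `𝓕_T`-measurable, `m ∈ ℝ`. Then `E[ξ] ≤ m` iff there exists a
martingale `M = (Mₛ)_{s∈[t,T]}` (adapted, integrable, with the martingale property on `[t,T]`)
such that `E[Mₛ] = m` for every `s ∈ [t,T]` and `M_T ≥ ξ` `P`-a.s. -/
theorem stmt1 {Ω : Type*} {m0 : MeasurableSpace Ω} (P : Measure Ω) [IsProbabilityMeasure P]
    (T : ℝ) (hT : 0 < T) (𝓕 : Filtration ℝ m0) (t : ℝ) (ht : t ∈ Icc 0 T)
    (ξ : Ω → ℝ) (hξint : Integrable ξ P) (hξmeas : StronglyMeasurable[𝓕 T] ξ) (m : ℝ) :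
    ∫ ω, ξ ω ∂P ≤ m ↔
      ∃ M : ℝ → Ω → ℝ,
        (∀ s ∈ Icc t T, Integrable (M s) P ∧ StronglyMeasurable[𝓕 s] (M s)) ∧
        (∀ s s' : ℝ, t ≤ s → s ≤ s' → s' ≤ T → P[M s'|𝓕 s] =ᵐ[P] M s) ∧
        (∀ s ∈ Icc t T, ∫ ω, M s ω ∂P = m) ∧
        (∀ᵐ ω ∂P, ξ ω ≤ M T ω) := by
  constructor
  · intro hm
    set c : ℝ := m - ∫ ω, ξ ω ∂P with hc
    refine ⟨fun s => P[ξ|𝓕 s] + fun _ => c, ?_, ?_, ?_, ?_⟩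
    · intro s _
      exact ⟨(integrable_condExp).add (integrable_const c),
        stronglyMeasurable_condExp.add stronglyMeasurable_const⟩
    · intro s s' hts hss' hs'T
      have h1 : P[P[ξ|𝓕 s'] + fun _ => c|𝓕 s] =ᵐ[P]
          P[P[ξ|𝓕 s']|𝓕 s] + P[fun _ => c|𝓕 s] :=
        condExp_add integrable_condExp (integrable_const c) _
      have h2 : P[P[ξ|𝓕 s']|𝓕 s] =ᵐ[P] P[ξ|𝓕 s] :=
        condExp_condExp_of_le (𝓕.mono hss') (𝓕.le s')
      have hcc := condExp_const (𝓕.le s) c (μ := P)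
      filter_upwards [h1, h2] with ω hω1 hω2
      simp only [Pi.add_apply] at hω1 ⊢
      rw [hω1, hω2, congrFun hcc ω]
    · intro s _
      have : ∫ ω, ((P[ξ|𝓕 s]) ω + c) ∂P = (∫ ω, (P[ξ|𝓕 s]) ω ∂P) + c := by
        rw [integral_add integrable_condExp (integrable_const c), integral_const]
        simp
      simp only [Pi.add_apply]
      rw [this, integral_condExp (𝓕.le s)]
      simp [hc]
    · have hMT : P[ξ|𝓕 T] = ξ := condExp_of_stronglyMeasurable (𝓕.le T) hξmeas hξint
      filter_upwards with ω
      simp only [Pi.add_apply, congrFun hMT ω]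
      linarith
  · rintro ⟨M, hint, _, hmean, hle⟩
    have hTmem : T ∈ Icc t T := ⟨ht.2, le_rfl⟩
    calc ∫ ω, ξ ω ∂P ≤ ∫ ω, M T ω ∂P :=
          integral_mono_ae hξint ((hint T hTmem).1) hle
      _ = m := hmean T hTmem
end

section
/- In the abstract expectation-constraint setup, let (t,x,m) ∈ 𝐒̂, ν ∈ 𝓤(t,x,m), M ∈ 𝓜⁺_{t,m,x}(ν), τ ∈ 𝓣^t, and let 𝓓 ⊆ 𝐒̂ be a set with (τ, X^ν_{t,x}(τ), M(τ)) ∈ 𝓓 P-almost surely. Assume Assumption A: for all (t,x,m) ∈ 𝐒̂, ν ∈ 𝓤(t,x,m), M ∈ 𝓜⁺_{t,m,x}(ν), τ ∈ 𝓣^t and P-a.e. ω, there exists ν_ω ∈ 𝓤(τ(ω), X^ν_{t,x}(τ)(ω), M(τ)(ω)) with E[f(X^ν_{t,x}(T))|𝓕_τ](ω) ≤ F(τ(ω), X^ν_{t,x}(τ)(ω); ν_ω). Then for every measurable function φ : 𝐒̂ → [−∞,∞] with V ≤ φ on 𝓓, one has E[φ(τ, X^ν_{t,x}(τ), M(τ))⁻]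 < ∞ and F(t,x;ν) ≤ E[φ(τ, X^ν_{t,x}(τ), M(τ))]. -/
open MeasureTheory Filter Set

/-- The positive part of an extended real number, as an element of `ℝ≥0∞`. -/
noncomputable def erealPos (y : EReal) : ENNReal :=
  if y = ⊤ then ⊤ else ENNReal.ofReal y.toReal

/-- The expectation of an `EReal`-valued random variable, with the convention
`E[Y] := −∞` whenever `E[Y⁺] = E[Y⁻] = ∞` (this is the convention (2.7) of the paper,
realized by the `EReal` subtraction `⊤ - ⊤ = ⊥`). -/
noncomputable def eexp {Ω : Type*} [MeasurableSpace Ω] (P : Measure Ω) (Y : Ω → EReal) :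
    EReal :=
  ((∫⁻ ω, erealPos (Y ω) ∂P : ENNReal) : EReal) - ((∫⁻ ω, erealPos (-(Y ω)) ∂P : ENNReal) : EReal)

/-- A path `u` is càdlàg on `[a,b]`: right-continuous on `[a,b)` and with left limits
on `(a,b]`. -/
def CadlagOn {β : Type*} [TopologicalSpace β] (u : ℝ → β) (a b : ℝ) : Prop :=
  (∀ s ∈ Set.Ico a b, ContinuousWithinAt u (Set.Ici s) s) ∧
  (∀ s ∈ Set.Ioc a b, ∃ l, Filter.Tendsto u (nhdsWithin s (Set.Iio s)) (nhds l))


lemma erealPos_coe (r : ℝ) : erealPos (r : EReal) = ENNReal.ofReal r := by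
  simp [erealPos]

lemma erealPos_mono {a b : EReal} (h : a ≤ b) : erealPos a ≤ erealPos b := by
  unfold erealPos
  split_ifs with ha hb hb
  · exact le_rfl
  · exact absurd (top_le_iff.1 (ha ▸ h)) hb
  · exact le_top
  · rcases eq_or_ne a ⊥ with h' | h'
    · simp [h']
    · exact ENNReal.ofReal_le_ofReal (EReal.toReal_le_toReal h h' hb)

/-- **Theorem 2.4 (i)** (weak dynamic programming, easy direction, expectation constraints).
In the abstract setup of Section 2, under Assumption A, for every measurable
`φ : [0,T]×S×ℝ → [−∞,∞]` with `V ≤ φ` on `𝓓`, the negative part of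
`φ(τ, X^ν_{t,x}(τ), M(τ))` is integrable and `F(t,x;ν) ≤ E[φ(τ, X^ν_{t,x}(τ), M(τ))]`. -/
theorem stmt2 {Ω : Type*} {m0 : MeasurableSpace Ω} (P : Measure Ω) [IsProbabilityMeasure P]
    (T : ℝ) (hT : 0 < T) (𝓕 : Filtration ℝ m0)
    {S : Type*} [MetricSpace S] [TopologicalSpace.SeparableSpace S]
    [MeasurableSpace S] [BorelSpace S]
    {𝒰 : Type*} (Uat : ℝ → Set 𝒰) (X : ℝ → S → 𝒰 → ℝ → Ω → S) (f g : S → ℝ)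
    (hfmeas : Measurable f) (hgmeas : Measurable g)
    -- the controlled state processes are càdlàg and adapted
    (hXcadlag : ∀ t ∈ Icc 0 T, ∀ (x : S), ∀ ν ∈ Uat t, ∀ ω,
      CadlagOn (fun s => X t x ν s ω) t T)
    (hXadapted : ∀ t ∈ Icc 0 T, ∀ (x : S), ∀ ν ∈ Uat t, ∀ s ∈ Icc t T,
      StronglyMeasurable[𝓕 s] (X t x ν s))
    -- integrability (2.1)
    (hfInt : ∀ t ∈ Icc 0 T, ∀ (x : S), ∀ ν ∈ Uat t,
      Integrable (fun ω => f (X t x ν T ω)) P)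
    (hgInt : ∀ t ∈ Icc 0 T, ∀ (x : S), ∀ ν ∈ Uat t,
      Integrable (fun ω => g (X t x ν T ω)) P)
    -- reward and constraint functions, admissible controls, value function
    (F G : ℝ → S → 𝒰 → ℝ)
    (hF : ∀ t x ν, F t x ν = ∫ ω, f (X t x ν T ω) ∂P)
    (hG : ∀ t x ν, G t x ν = ∫ ω, g (X t x ν T ω) ∂P)
    (Uadm : ℝ → S → ℝ → Set 𝒰)
    (hUadm : ∀ t x m, Uadm t x m = {ν ∈ Uat t | G t x ν ≤ m})
    (V : ℝ → S → ℝ → EReal)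
    (hV : ∀ t x m, V t x m = ⨆ ν ∈ Uadm t x m, ((F t x ν : ℝ) : EReal))
    -- the auxiliary families of càdlàg martingales `𝓜_{t,0}`
    (Mfam : ℝ → Set (ℝ → Ω → ℝ))
    (hMfam : ∀ t ∈ Icc 0 T, ∀ M ∈ Mfam t,
      (∀ ω, M t ω = 0) ∧
      (∀ ω, CadlagOn (fun s => M s ω) t T) ∧
      (∀ s ∈ Icc t T, Integrable (M s) P ∧ StronglyMeasurable[𝓕 s] (M s)) ∧
      (∀ s s' : ℝ, t ≤ s → s ≤ s' → s' ≤ T → P[M s'|𝓕 s] =ᵐ[P] M s))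
    -- richness (2.3): for each admissible control there is a martingale attaining the
    -- constraint value at time `T`
    (hrich : ∀ t ∈ Icc 0 T, ∀ (x : S), ∀ ν ∈ Uat t, ∃ M0 ∈ Mfam t,
      ∀ᵐ ω ∂P, G t x ν + M0 T ω = g (X t x ν T ω))
    -- the sets `𝓜⁺_{t,m,x}(ν)`
    (Mplus : ℝ → S → ℝ → 𝒰 → Set (ℝ → Ω → ℝ))
    (hMplus : ∀ t x m ν, Mplus t x m ν =
      {M | (∃ M0 ∈ Mfam t, ∀ s ω, M s ω = m + M0 s ω) ∧
        ∀ᵐ ω ∂P, g (X t x ν T ω) ≤ M T ω})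
    -- the subfiltrations `𝔽^t` and their adaptedness properties
    (𝓖 : ℝ → Filtration ℝ m0) (h𝓖 : ∀ t s, 𝓖 t s ≤ 𝓕 s)
    (hXadapted' : ∀ t ∈ Icc 0 T, ∀ (x : S), ∀ ν ∈ Uat t, ∀ s ∈ Icc t T,
      StronglyMeasurable[𝓖 t s] (X t x ν s))
    (hMadapted' : ∀ t ∈ Icc 0 T, ∀ M ∈ Mfam t, ∀ s ∈ Icc t T,
      StronglyMeasurable[𝓖 t s] (M s))
    -- Assumption A
    (hA : ∀ t' ∈ Icc 0 T, ∀ (x' : S) (m' : ℝ), ∀ ν' ∈ Uadm t' x' m',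
      ∀ M' ∈ Mplus t' x' m' ν',
      ∀ (τ' : Ω → ℝ), IsStoppingTime (𝓖 t') (fun ω => (τ' ω : WithTop ℝ)) → ∀ (hτ' : IsStoppingTime 𝓕 (fun ω => (τ' ω : WithTop ℝ))),
      (∀ ω, τ' ω ∈ Icc t' T) →
      ∀ᵐ ω ∂P, ∃ ν'' ∈ Uadm (τ' ω) (X t' x' ν' (τ' ω) ω) (M' (τ' ω) ω),
        (P[fun ω' => f (X t' x' ν' T ω')|hτ'.measurableSpace]) ω ≤
          F (τ' ω) (X t' x' ν' (τ' ω) ω) ν'')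
    -- the data of the theorem
    (t : ℝ) (ht : t ∈ Icc 0 T) (x : S) (m : ℝ)
    (ν : 𝒰) (hν : ν ∈ Uadm t x m) (M : ℝ → Ω → ℝ) (hM : M ∈ Mplus t x m ν)
    (τ : Ω → ℝ) (hτ : IsStoppingTime (𝓖 t) (fun ω => (τ ω : WithTop ℝ))) (hτ𝓕 : IsStoppingTime 𝓕 (fun ω => (τ ω : WithTop ℝ)))
    (hτT : ∀ ω, τ ω ∈ Icc t T)
    (𝓓 : Set (ℝ × S × ℝ))
    (h𝓓 : ∀ᵐ ω ∂P, (τ ω, X t x ν (τ ω) ω, M (τ ω) ω) ∈ 𝓓)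
    (φ : ℝ × S × ℝ → EReal) (hφmeas : Measurable φ)
    (hVφ : ∀ z ∈ 𝓓, V z.1 z.2.1 z.2.2 ≤ φ z) :
    (∫⁻ ω, erealPos (-(φ (τ ω, X t x ν (τ ω) ω, M (τ ω) ω))) ∂P) < ⊤ ∧
      ((F t x ν : ℝ) : EReal) ≤
        eexp P (fun ω => φ (τ ω, X t x ν (τ ω) ω, M (τ ω) ω)) := by
  have hνU : ν ∈ Uat t := by
    have h := hν; rw [hUadm] at h; exact h.1
  have hfint : Integrable (fun ω => f (X t x ν T ω)) P := hfInt t ht x ν hνU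
  set g' : Ω → ℝ := P[fun ω' => f (X t x ν T ω')|hτ𝓕.measurableSpace] with hg'def
  have hg'int : Integrable g' P := integrable_condExp
  set Y : Ω → EReal := fun ω => φ (τ ω, X t x ν (τ ω) ω, M (τ ω) ω) with hYdef
  have hAE : ∀ᵐ ω ∂P, ((g' ω : ℝ) : EReal) ≤ Y ω := by
    filter_upwards [hA t ht x m ν hν M hM τ hτ hτ𝓕 hτT, h𝓓] with ω hω hDω
    obtain ⟨ν'', hν''adm, hle⟩ := hω
    calc ((g' ω : ℝ) : EReal) ≤ ((F (τ ω) (X t x ν (τ ω) ω) ν'' : ℝ) : EReal) :=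
        EReal.coe_le_coe_iff.2 hle
      _ ≤ V (τ ω) (X t x ν (τ ω) ω) (M (τ ω) ω) := by
        rw [hV]
        exact le_iSup₂ (f := fun ν''' (_ : ν''' ∈ Uadm (τ ω) (X t x ν (τ ω) ω) (M (τ ω) ω)) =>
          ((F (τ ω) (X t x ν (τ ω) ω) ν''' : ℝ) : EReal)) ν'' hν''adm
      _ ≤ φ (τ ω, X t x ν (τ ω) ω, M (τ ω) ω) := hVφ _ hDω
  have hnorm : ∀ ω, ENNReal.ofReal (-(g' ω)) ≤ (‖g' ω‖₊ : ENNReal) := by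
    intro ω
    calc ENNReal.ofReal (-(g' ω)) ≤ ENNReal.ofReal |g' ω| :=
        ENNReal.ofReal_le_ofReal (neg_le_abs _)
      _ = (‖g' ω‖₊ : ENNReal) := by rw [← Real.norm_eq_abs, ofReal_norm, enorm_eq_nnnorm]
  have hnorm' : ∀ ω, ENNReal.ofReal (g' ω) ≤ (‖g' ω‖₊ : ENNReal) := by
    intro ω
    calc ENNReal.ofReal (g' ω) ≤ ENNReal.ofReal |g' ω| :=
        ENNReal.ofReal_le_ofReal (le_abs_self _)
      _ = (‖g' ω‖₊ : ENNReal) := by rw [← Real.norm_eq_abs, ofReal_norm, enorm_eq_nnnorm]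
  have hnnfin : (∫⁻ ω, (‖g' ω‖₊ : ENNReal) ∂P) < ⊤ := hg'int.2
  have hnegAE : ∀ᵐ ω ∂P, erealPos (-(Y ω)) ≤ ENNReal.ofReal (-(g' ω)) := by
    filter_upwards [hAE] with ω hω
    have h2 : (-(Y ω)) ≤ ((-(g' ω) : ℝ) : EReal) := by
      rw [EReal.coe_neg]; exact EReal.neg_le_neg_iff.2 hω
    exact (erealPos_mono h2).trans_eq (by rw [← erealPos_coe, EReal.coe_neg])
  have hnegfin : (∫⁻ ω, erealPos (-(Y ω)) ∂P) < ⊤ :=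
    lt_of_le_of_lt (lintegral_mono_ae hnegAE)
      (lt_of_le_of_lt (lintegral_mono hnorm) hnnfin)
  refine ⟨hnegfin, ?_⟩
  have hposle : (∫⁻ ω, erealPos ((g' ω : ℝ) : EReal) ∂P) ≤ ∫⁻ ω, erealPos (Y ω) ∂P :=
    lintegral_mono_ae (hAE.mono fun ω h => erealPos_mono h)
  have hnegle : (∫⁻ ω, erealPos (-(Y ω)) ∂P) ≤ ∫⁻ ω, erealPos (-((g' ω : ℝ) : EReal)) ∂P :=
    lintegral_mono_ae (hAE.mono fun ω h => erealPos_mono (EReal.neg_le_neg_iff.2 h))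
  have hmono : eexp P (fun ω => ((g' ω : ℝ) : EReal)) ≤ eexp P Y := by
    unfold eexp
    exact EReal.sub_le_sub (EReal.coe_ennreal_le_coe_ennreal_iff.2 hposle)
      (EReal.coe_ennreal_le_coe_ennreal_iff.2 hnegle)
  have hA' : (∫⁻ ω, erealPos ((g' ω : ℝ) : EReal) ∂P) = ∫⁻ ω, ENNReal.ofReal (g' ω) ∂P := by
    simp_rw [erealPos_coe]
  have hB' : (∫⁻ ω, erealPos (-((g' ω : ℝ) : EReal)) ∂P)
      = ∫⁻ ω, ENNReal.ofReal (-(g' ω)) ∂P := by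
    simp_rw [← EReal.coe_neg, erealPos_coe]
  have hAfin : (∫⁻ ω, ENNReal.ofReal (g' ω) ∂P) ≠ ⊤ :=
    (lt_of_le_of_lt (lintegral_mono hnorm') hnnfin).ne
  have hBfin : (∫⁻ ω, ENNReal.ofReal (-(g' ω)) ∂P) ≠ ⊤ :=
    (lt_of_le_of_lt (lintegral_mono hnorm) hnnfin).ne
  have hcast : ∀ (a : ENNReal), a ≠ ⊤ → ((a.toReal : ℝ) : EReal) = (a : EReal) := by
    intro a ha
    rw [← EReal.toReal_coe_ennreal (x := a)]
    exact EReal.coe_toReal (by simpa using ha) (by simp)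
  have heq : eexp P (fun ω => ((g' ω : ℝ) : EReal)) = ((∫ ω, g' ω ∂P : ℝ) : EReal) := by
    unfold eexp
    rw [hA', hB', integral_eq_lintegral_pos_part_sub_lintegral_neg_part hg'int,
      EReal.coe_sub, hcast _ hAfin, hcast _ hBfin]
  have hint_eq : (∫ ω, g' ω ∂P) = F t x ν := by
    rw [hg'def, integral_condExp hτ𝓕.measurableSpace_le, ← hF]
  calc ((F t x ν : ℝ) : EReal) = eexp P (fun ω => ((g' ω : ℝ) : EReal)) := by
        rw [heq, hint_eq]
    _ ≤ eexp P Y := hmono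
end

section
/- In the abstract expectation-constraint setup, let (t,x,m) ∈ 𝔻 and δ₀ > 0. For each δ > 0 let ν^δ ∈ 𝓤(t,x,m+δ) be a control with F(t,x;ν^δ) ≥ min(δ^{-1}, V(t,x,m+δ)) − δ. Suppose that for every 0 < δ ≤ δ₀ there exists ν̃^δ ∈ 𝓤(t,x,m) such that P{X^{ν^δ}_{t,x}(T) ≠ X^{ν̃^δ}_{t,x}(T)} → 0 as δ ↓ 0 and the family {(f(X^{ν^δ}_{t,x}(T)) − f(X^{ν̃^δ}_{t,x}(T)))⁺ : 0 < δ ≤ δ₀} ⊆ L¹(P) is uniformly integrable. Then the function m' ↦ V(t,x,m') is right continuous at m. -/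
open MeasureTheory Filter Set

/-- **Lemma 2.7.** In the abstract expectation-constraint setup, if for every `δ > 0` there is
a `δ`-optimal control `ν^δ` at level `m + δ` which can be modified into an admissible control
`ν̃^δ ∈ 𝓤(t,x,m)` differing from `ν^δ` at time `T` only with vanishing probability, with the
positive parts of the reward differences uniformly integrable, then `m' ↦ V(t,x,m')` is right
continuous at `m`. -/
theorem stmt6 {Ω : Type*} {m0 : MeasurableSpace Ω} (P : Measure Ω) [IsProbabilityMeasure P]
    (T : ℝ) (hT : 0 < T) {S : Type*} [MetricSpace S] [TopologicalSpace.SeparableSpace S]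
    {𝒰 : Type*} (Uat : ℝ → Set 𝒰) (X : ℝ → S → 𝒰 → ℝ → Ω → S) (f g : S → ℝ)
    -- integrability of the reward and constraint functionals
    (hfInt : ∀ t ∈ Icc 0 T, ∀ (x : S), ∀ ν ∈ Uat t,
      Integrable (fun ω => f (X t x ν T ω)) P)
    (hgInt : ∀ t ∈ Icc 0 T, ∀ (x : S), ∀ ν ∈ Uat t,
      Integrable (fun ω => g (X t x ν T ω)) P)
    -- the reward and constraint functions, the admissible sets and the value function
    (F G : ℝ → S → 𝒰 → ℝ)
    (hF : ∀ t x ν, F t x ν = ∫ ω, f (X t x ν T ω) ∂P)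
    (hG : ∀ t x ν, G t x ν = ∫ ω, g (X t x ν T ω) ∂P)
    (Uadm : ℝ → S → ℝ → Set 𝒰)
    (hUadm : ∀ t x m, Uadm t x m = {ν ∈ Uat t | G t x ν ≤ m})
    (V : ℝ → S → ℝ → EReal)
    (hV : ∀ t x m, V t x m = ⨆ ν ∈ Uadm t x m, ((F t x ν : ℝ) : EReal))
    -- data of the lemma
    (t : ℝ) (ht : t ∈ Icc 0 T) (x : S) (m : ℝ)
    (hD : (Uadm t x m).Nonempty)
    (δ₀ : ℝ) (hδ₀ : 0 < δ₀)
    (νδ : ℝ → 𝒰)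
    (hνδ : ∀ δ > (0 : ℝ), νδ δ ∈ Uadm t x (m + δ) ∧
      min ((δ⁻¹ : ℝ) : EReal) (V t x (m + δ)) - ((δ : ℝ) : EReal) ≤
        ((F t x (νδ δ) : ℝ) : EReal))
    (ν'δ : ℝ → 𝒰)
    (hν'δ : ∀ δ ∈ Ioc (0 : ℝ) δ₀, ν'δ δ ∈ Uadm t x m)
    (hprob : Tendsto (fun δ : ℝ => P {ω | X t x (νδ δ) T ω ≠ X t x (ν'δ δ) T ω})
      (nhdsWithin 0 (Ioi 0)) (nhds 0))
    (hUI : UniformIntegrable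
      (fun (δi : Ioc (0 : ℝ) δ₀) => fun ω =>
        max (f (X t x (νδ δi) T ω) - f (X t x (ν'δ δi) T ω)) 0) 1 P) :
    ContinuousWithinAt (fun m' => V t x m') (Ici m) m := by
  -- monotonicity of the value function in `m`
  have hmono : ∀ m₁ m₂ : ℝ, m₁ ≤ m₂ → V t x m₁ ≤ V t x m₂ := by
    intro m₁ m₂ h
    rw [hV, hV]
    refine iSup_le fun ν => iSup_le fun hν => ?_
    refine le_iSup₂_of_le ν ?_ le_rfl
    rw [hUadm] at hν ⊢
    exact ⟨hν.1, hν.2.trans h⟩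
  have hVm_bot : V t x m ≠ ⊥ := by
    obtain ⟨ν₀, hν₀⟩ := hD
    have h1 : ((F t x ν₀ : ℝ) : EReal) ≤ V t x m := by
      rw [hV]
      exact le_iSup₂ (f := fun ν _ => ((F t x ν : ℝ) : EReal)) ν₀ hν₀
    intro hbot
    rw [hbot, le_bot_iff] at h1
    exact (EReal.coe_ne_bot _) h1
  by_cases htop : V t x m = ⊤
  · -- if `V t x m = ⊤`, the value function is identically `⊤` on `Ici m`
    refine Tendsto.congr' ?_ tendsto_const_nhds
    filter_upwards [self_mem_nhdsWithin] with m' hm'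
    exact (htop.trans (eq_top_iff.2 (htop ▸ hmono m m' hm')).symm)
  · set vm : ℝ := (V t x m).toReal with hvmdef
    have hvm : ((vm : ℝ) : EReal) = V t x m := EReal.coe_toReal htop hVm_bot
    -- main estimate
    have key : ∀ ε : ℝ, 0 < ε →
        ∀ᶠ m' in nhdsWithin m (Ici m), V t x m' ≤ ((vm + 2 * ε : ℝ) : EReal) := by
      intro ε hε
      obtain ⟨η, hη, hUIη⟩ := hUI.2.1 hε
      have hmem : {δ : ℝ | P {ω | X t x (νδ δ) T ω ≠ X t x (ν'δ δ) T ω} < ENNReal.ofReal η}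
          ∈ nhdsWithin (0 : ℝ) (Ioi 0) :=
        hprob (Iio_mem_nhds (ENNReal.ofReal_pos.2 hη))
      obtain ⟨δ₂, hδ₂pos, hδ₂⟩ := mem_nhdsGT_iff_exists_Ioc_subset.1 hmem
      set c : ℝ := max (vm + 2 * ε + 1) 1 with hcdef
      have hc : 0 < c := lt_of_lt_of_le one_pos (le_max_right _ _)
      set δ₁ : ℝ := min (min δ₀ δ₂) (min ε c⁻¹) with hδ₁def
      have hδ₁pos : 0 < δ₁ := by
        refine lt_min (lt_min hδ₀ hδ₂pos) (lt_min hε (by positivity))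
      have claim : ∀ δ : ℝ, δ ∈ Ioc 0 δ₁ → V t x (m + δ) ≤ ((vm + 2 * ε : ℝ) : EReal) := by
        rintro δ ⟨hδpos, hδle⟩
        have hδδ₀ : δ ≤ δ₀ := hδle.trans ((min_le_left _ _).trans (min_le_left _ _))
        have hδδ₂ : δ ≤ δ₂ := hδle.trans ((min_le_left _ _).trans (min_le_right _ _))
        have hδε : δ ≤ ε := hδle.trans ((min_le_right _ _).trans (min_le_left _ _))
        have hδc : δ ≤ c⁻¹ := hδle.trans ((min_le_right _ _).trans (min_le_right _ _))
        obtain ⟨hνmem, hνF⟩ := hνδ δ hδpos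
        have hν'mem := hν'δ δ ⟨hδpos, hδδ₀⟩
        have hνU : νδ δ ∈ Uat t := by rw [hUadm] at hνmem; exact hνmem.1
        have hν'U : ν'δ δ ∈ Uat t := by
          have := hν'mem; rw [hUadm] at this; exact this.1
        have hIν := hfInt t ht x _ hνU
        have hIν' := hfInt t ht x _ hν'U
        set h : Ω → ℝ :=
          fun ω => max (f (X t x (νδ δ) T ω) - f (X t x (ν'δ δ) T ω)) 0 with hhdef
        have hInt : Integrable h P := (hIν.sub hIν').pos_part
        set A : Set Ω := {ω | X t x (νδ δ) T ω ≠ X t x (ν'δ δ) T ω} with hAdef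
        have hPA : P A < ENNReal.ofReal η := hδ₂ ⟨hδpos, hδδ₂⟩
        set s : Set Ω := toMeasurable P A with hsdef
        have hs : MeasurableSet s := measurableSet_toMeasurable P A
        have hPs : P s ≤ ENNReal.ofReal η := by
          rw [hsdef, measure_toMeasurable]; exact hPA.le
        have hind : s.indicator h = h := by
          funext ω
          by_cases hω : ω ∈ s
          · simp [indicator_of_mem hω]
          · have hωA : ω ∉ A := fun h' => hω (subset_toMeasurable P A h')
            have hXeq : X t x (νδ δ) T ω = X t x (ν'δ δ) T ω := not_not.1 hωA
            simp [indicator_of_notMem hω, hhdef, hXeq]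
        have hsn : eLpNorm h 1 P ≤ ENNReal.ofReal ε := by
          have := hUIη ⟨δ, hδpos, hδδ₀⟩ s hs hPs
          rwa [show (fun (δi : Ioc (0 : ℝ) δ₀) => fun ω =>
              max (f (X t x (νδ δi) T ω) - f (X t x (ν'δ δi) T ω)) 0)
              ⟨δ, hδpos, hδδ₀⟩ = h from rfl, hind] at this
        have hih : ∫ ω, h ω ∂P ≤ ε := by
          have h1 : ∫ ω, h ω ∂P ≤ ∫ ω, ‖h ω‖ ∂P :=
            integral_mono hInt hInt.norm fun ω => le_abs_self _
          have h2 : ∫ ω, ‖h ω‖ ∂P = (eLpNorm h 1 P).toReal := by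
            rw [eLpNorm_one_eq_lintegral_enorm,
              integral_norm_eq_lintegral_enorm hInt.aestronglyMeasurable]
          have h3 : (eLpNorm h 1 P).toReal ≤ ε := by
            have := ENNReal.toReal_mono ENNReal.ofReal_ne_top hsn
            rwa [ENNReal.toReal_ofReal hε.le] at this
          linarith
        have hFν' : F t x (ν'δ δ) ≤ vm := by
          have h1 : ((F t x (ν'δ δ) : ℝ) : EReal) ≤ V t x m := by
            rw [hV]
            exact le_iSup₂ (f := fun ν _ => ((F t x ν : ℝ) : EReal)) _ hν'mem
          rw [← hvm] at h1
          exact_mod_cast h1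
        have hFdiff : F t x (νδ δ) - F t x (ν'δ δ) ≤ ε := by
          rw [hF, hF, ← integral_sub hIν hIν']
          exact le_trans (integral_mono (hIν.sub hIν') hInt fun ω => le_max_left _ _) hih
        have hFν : F t x (νδ δ) ≤ vm + ε := by linarith
        rcases le_total (V t x (m + δ)) (((δ⁻¹ : ℝ) : EReal)) with hle | hle
        · have hbot' : V t x (m + δ) ≠ ⊥ := by
            intro hb
            have := hmono m (m + δ) (by linarith)
            rw [hb, le_bot_iff] at this
            exact hVm_bot this
          have htop' : V t x (m + δ) ≠ ⊤ := by
            intro htp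
            rw [htp, top_le_iff] at hle
            exact (EReal.coe_ne_top _) hle
          set w : ℝ := (V t x (m + δ)).toReal with hwdef
          have hw : ((w : ℝ) : EReal) = V t x (m + δ) := EReal.coe_toReal htop' hbot'
          rw [min_eq_right hle, ← hw, ← EReal.coe_sub] at hνF
          have hwF : w - δ ≤ F t x (νδ δ) := by exact_mod_cast hνF
          have : w ≤ vm + 2 * ε := by linarith
          rw [← hw]
          exact_mod_cast this
        · exfalso
          rw [min_eq_left hle, ← EReal.coe_sub] at hνF
          have h1 : δ⁻¹ - δ ≤ F t x (νδ δ) := by exact_mod_cast hνF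
          have h2 : c ≤ δ⁻¹ := by
            have := one_div_le_one_div_of_le hδpos hδc
            rwa [one_div, one_div, inv_inv] at this
          have hδ1 : δ ≤ 1 := hδc.trans (inv_le_one_of_one_le₀ (le_max_right _ _))
          have hcge : vm + 2 * ε + 1 ≤ c := le_max_left _ _
          linarith
      filter_upwards [Ico_mem_nhdsGE_of_mem (show m ∈ Ico m (m + δ₁) from ⟨le_rfl, by linarith⟩)] with m' hm'
      rcases eq_or_lt_of_le hm'.1 with heq | hlt
      · rw [← heq, ← hvm]
        exact_mod_cast (by linarith : vm ≤ vm + 2 * ε)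
      · have : m' = m + (m' - m) := by ring
        rw [this]
        exact claim (m' - m) ⟨by linarith, by linarith [hm'.2]⟩
    -- conclude right continuity via order topology
    refine tendsto_order.2 ⟨?_, ?_⟩
    · intro a ha
      filter_upwards [self_mem_nhdsWithin] with m' hm'
      exact lt_of_lt_of_le ha (hmono m m' hm')
    · intro a ha
      obtain ⟨b, hb1, hb2⟩ := EReal.exists_between_coe_real ha
      have hb1' : V t x m < ((b : ℝ) : EReal) := hb1
      have hvb : vm < b := by rw [← hvm] at hb1'; exact_mod_cast hb1'
      have hε : 0 < (b - vm) / 2 := by linarith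
      filter_upwards [key _ hε] with m' hm'
      refine lt_of_le_of_lt (hm'.trans ?_) hb2
      exact_mod_cast (by linarith : vm + 2 * ((b - vm) / 2) ≤ b)
end

section
/- In the state-constraint setup, let (t,x) ∈ [0,T]×ℝ^d and let {τ^ν : ν ∈ 𝓤̄(t,x)} ⊆ 𝓣^t be a family of stopping times. Assume Assumption Ā: for all (t,x), ν ∈ 𝓤̄(t,x), τ ∈ 𝓣^t and P-a.e. ω there exists ν_ω ∈ 𝓤̄(τ(ω), X^ν_{t,x}(τ)(ω)) with E[f(X^ν_{t,x}(T))|𝓕_τ](ω) ≤ F(τ(ω), X^ν_{t,x}(τ)(ω); ν_ω). Then for every measurable function φ : [0,T]×ℝ^d → [−∞,∞] with V̄ ≤ φ, one has E[φ(τ^ν, X^ν_{t,x}(τ^ν))⁻] < ∞ for all ν ∈ 𝓤̄(t,x), and V̄(t,x) ≤ sup_{ν∈𝓤̄(t,x)} E[φ(τ^ν, X^ν_{t,x}(τ^ν))]. -/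
open MeasureTheory Filter Set

lemma erealPos_mono_s7 : Monotone erealPos := by
  intro a b hab
  unfold erealPos
  split_ifs with ha hb hb
  · exact le_top
  · exact absurd (top_le_iff.mp (ha ▸ hab)) hb
  · exact le_top
  · rcases eq_or_ne a ⊥ with rfl | ha'
    · simp
    · exact ENNReal.ofReal_le_ofReal (EReal.toReal_le_toReal hab ha' hb)

lemma erealPos_neg_coe (r : ℝ) : erealPos (-(r : EReal)) = ENNReal.ofReal (-r) := by
  rw [← EReal.coe_neg, erealPos_coe]

lemma coe_ennreal_toReal' {x : ENNReal} (hx : x ≠ ⊤) : (x : EReal) = ((x.toReal : ℝ) : EReal) := by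
  rw [← EReal.toReal_coe_ennreal]
  exact (EReal.coe_toReal (by simpa using hx) (by simp)).symm

lemma key_lemma {Ω : Type*} [MeasurableSpace Ω] (P : Measure Ω) [IsFiniteMeasure P]
    (Z : Ω → ℝ) (hZ : Integrable Z P) (Y : Ω → EReal)
    (h : ∀ᵐ ω ∂P, (Z ω : EReal) ≤ Y ω) :
    (∫⁻ ω, erealPos (-(Y ω)) ∂P) < ⊤ ∧ ((∫ ω, Z ω ∂P : ℝ) : EReal) ≤ eexp P Y := by
  have hB' : (∫⁻ ω, ENNReal.ofReal (-(Z ω)) ∂P) < ⊤ := by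
    refine lt_of_le_of_lt (lintegral_mono fun ω => ?_) hZ.2
    rw [← ofReal_norm_eq_enorm, Real.norm_eq_abs]
    exact ENNReal.ofReal_le_ofReal (neg_le_abs _)
  have hBle : (∫⁻ ω, erealPos (-(Y ω)) ∂P) ≤ ∫⁻ ω, ENNReal.ofReal (-(Z ω)) ∂P := by
    refine lintegral_mono_ae (h.mono fun ω hω => ?_)
    calc erealPos (-(Y ω)) ≤ erealPos (-(Z ω : EReal)) :=
          erealPos_mono_s7 (EReal.neg_le_neg_iff.mpr hω)
      _ = ENNReal.ofReal (-(Z ω)) := erealPos_neg_coe _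
  have hB : (∫⁻ ω, erealPos (-(Y ω)) ∂P) < ⊤ := lt_of_le_of_lt hBle hB'
  refine ⟨hB, ?_⟩
  have hAge : (∫⁻ ω, ENNReal.ofReal (Z ω) ∂P) ≤ ∫⁻ ω, erealPos (Y ω) ∂P := by
    refine lintegral_mono_ae (h.mono fun ω hω => ?_)
    rw [← erealPos_coe]
    exact erealPos_mono_s7 hω
  have hA' : (∫⁻ ω, ENNReal.ofReal (Z ω) ∂P) < ⊤ := by
    refine lt_of_le_of_lt (lintegral_mono fun ω => ?_) hZ.2
    rw [← ofReal_norm_eq_enorm, Real.norm_eq_abs]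
    exact ENNReal.ofReal_le_ofReal (le_abs_self _)
  rw [integral_eq_lintegral_pos_part_sub_lintegral_neg_part hZ]
  unfold eexp
  set A := ∫⁻ ω, erealPos (Y ω) ∂P
  set B := ∫⁻ ω, erealPos (-(Y ω)) ∂P
  rcases eq_or_ne A ⊤ with hA | hA
  · rw [hA, coe_ennreal_toReal' hB.ne, EReal.coe_ennreal_top, EReal.top_sub_coe]
    exact le_top
  · rw [coe_ennreal_toReal' hB.ne, coe_ennreal_toReal' hA, ← EReal.coe_sub, EReal.coe_le_coe_iff]
    have h1 : (∫⁻ ω, ENNReal.ofReal (Z ω) ∂P).toReal ≤ A.toReal :=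
      (ENNReal.toReal_le_toReal hA'.ne hA).mpr hAge
    have h2 : B.toReal ≤ (∫⁻ ω, ENNReal.ofReal (-(Z ω)) ∂P).toReal :=
      (ENNReal.toReal_le_toReal hB.ne hB'.ne).mpr hBle
    linarith

/-- **Theorem 3.1 (i)** (state constraints, easy direction). In the state-constraint setup,
under Assumption Ā, for any measurable `φ : [0,T]×ℝ^d → [−∞,∞]` with `V̄ ≤ φ`, the negative
parts `φ(τ^ν, X^ν_{t,x}(τ^ν))⁻` are integrable for all `ν ∈ 𝓤̄(t,x)` and
`V̄(t,x) ≤ sup_{ν∈𝓤̄(t,x)} E[φ(τ^ν, X^ν_{t,x}(τ^ν))]`. -/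
theorem stmt7 {Ω : Type*} {m0 : MeasurableSpace Ω} (P : Measure Ω) [IsProbabilityMeasure P]
    (T : ℝ) (hT : 0 < T) (𝓕 : Filtration ℝ m0) (d : ℕ)
    {𝒰 : Type*} (Uat : ℝ → Set 𝒰)
    (X : ℝ → (Fin d → ℝ) → 𝒰 → ℝ → Ω → (Fin d → ℝ)) (f : (Fin d → ℝ) → ℝ)
    (hfmeas : Measurable f)
    -- the controlled state processes are càdlàg and adapted
    (hXcadlag : ∀ t ∈ Icc 0 T, ∀ (x : Fin d → ℝ), ∀ ν ∈ Uat t, ∀ ω,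
      CadlagOn (fun s => X t x ν s ω) t T)
    (hXadapted : ∀ t ∈ Icc 0 T, ∀ (x : Fin d → ℝ), ∀ ν ∈ Uat t, ∀ s ∈ Icc t T,
      StronglyMeasurable[𝓕 s] (X t x ν s))
    -- integrability of the reward
    (hfInt : ∀ t ∈ Icc 0 T, ∀ (x : Fin d → ℝ), ∀ ν ∈ Uat t,
      Integrable (fun ω => f (X t x ν T ω)) P)
    -- reward function
    (F : ℝ → (Fin d → ℝ) → 𝒰 → ℝ)
    (hF : ∀ t x ν, F t x ν = ∫ ω, f (X t x ν T ω) ∂P)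
    -- the open state constraint set, admissible controls and value function
    (𝒪 : Set (Fin d → ℝ)) (h𝒪 : IsOpen 𝒪)
    (Ubar : ℝ → (Fin d → ℝ) → Set 𝒰)
    (hUbar : ∀ t x, Ubar t x =
      {ν ∈ Uat t | ∀ᵐ ω ∂P, ∀ s ∈ Icc t T, X t x ν s ω ∈ 𝒪})
    (Vbar : ℝ → (Fin d → ℝ) → EReal)
    (hVbar : ∀ t x, Vbar t x = ⨆ ν ∈ Ubar t x, ((F t x ν : ℝ) : EReal))
    -- the subfiltrations `𝔽^t`
    (𝓖 : ℝ → Filtration ℝ m0) (h𝓖 : ∀ t s, 𝓖 t s ≤ 𝓕 s)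
    (hXadapted' : ∀ t ∈ Icc 0 T, ∀ (x : Fin d → ℝ), ∀ ν ∈ Uat t, ∀ s ∈ Icc t T,
      StronglyMeasurable[𝓖 t s] (X t x ν s))
    -- Assumption Ā
    (hA : ∀ t' ∈ Icc 0 T, ∀ (x' : Fin d → ℝ), ∀ ν' ∈ Ubar t' x',
      ∀ (τ' : Ω → ℝ), IsStoppingTime (𝓖 t') (fun ω => (τ' ω : WithTop ℝ)) →
      ∀ (hτ' : IsStoppingTime 𝓕 (fun ω => (τ' ω : WithTop ℝ))),
      (∀ ω, τ' ω ∈ Icc t' T) →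
      ∀ᵐ ω ∂P, ∃ ν'' ∈ Ubar (τ' ω) (X t' x' ν' (τ' ω) ω),
        (P[fun ω' => f (X t' x' ν' T ω')|hτ'.measurableSpace]) ω ≤
          F (τ' ω) (X t' x' ν' (τ' ω) ω) ν'')
    -- the data of the theorem
    (t : ℝ) (ht : t ∈ Icc 0 T) (x : Fin d → ℝ)
    (τf : 𝒰 → Ω → ℝ)
    (hτf : ∀ ν ∈ Ubar t x, IsStoppingTime (𝓖 t) (fun ω => (τf ν ω : WithTop ℝ)) ∧
      IsStoppingTime 𝓕 (fun ω => (τf ν ω : WithTop ℝ)) ∧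
      ∀ ω, τf ν ω ∈ Icc t T)
    (φ : ℝ × (Fin d → ℝ) → EReal) (hφmeas : Measurable φ)
    (hVφ : ∀ t' x', Vbar t' x' ≤ φ (t', x')) :
    (∀ ν ∈ Ubar t x,
      (∫⁻ ω, erealPos (-(φ (τf ν ω, X t x ν (τf ν ω) ω))) ∂P) < ⊤) ∧
    Vbar t x ≤ ⨆ ν ∈ Ubar t x, eexp P (fun ω => φ (τf ν ω, X t x ν (τf ν ω) ω)) := by
  have hνU : ∀ ν ∈ Ubar t x, ν ∈ Uat t := fun ν hν => by
    rw [hUbar] at hν; exact hν.1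
  have main : ∀ ν ∈ Ubar t x,
      (∫⁻ ω, erealPos (-(φ (τf ν ω, X t x ν (τf ν ω) ω))) ∂P) < ⊤ ∧
      ((F t x ν : ℝ) : EReal) ≤ eexp P (fun ω => φ (τf ν ω, X t x ν (τf ν ω) ω)) := by
    intro ν hν
    obtain ⟨hτG, hτF, hτmem⟩ := hτf ν hν
    have hm : hτF.measurableSpace ≤ m0 := hτF.measurableSpace_le
    set Z := P[fun ω' => f (X t x ν T ω')|hτF.measurableSpace] with hZdef
    have hZint : Integrable Z P := integrable_condExp
    have hZeq : ∫ ω, Z ω ∂P = F t x ν := by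
      rw [hF]; exact integral_condExp hm
    have hae : ∀ᵐ ω ∂P, (Z ω : EReal) ≤ φ (τf ν ω, X t x ν (τf ν ω) ω) := by
      filter_upwards [hA t ht x ν hν (τf ν) hτG hτF hτmem] with ω hω
      obtain ⟨ν'', hν'', hle⟩ := hω
      refine le_trans (EReal.coe_le_coe_iff.mpr hle) (le_trans ?_ (hVφ _ _))
      rw [hVbar]
      exact le_iSup₂ (f := fun ν'' (_ : ν'' ∈ Ubar (τf ν ω) (X t x ν (τf ν ω) ω)) =>
        ((F (τf ν ω) (X t x ν (τf ν ω) ω) ν'' : ℝ) : EReal)) ν'' hν''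
    have hkey := key_lemma P Z hZint _ hae
    rw [hZeq] at hkey
    exact hkey
  constructor
  · exact fun ν hν => (main ν hν).1
  · rw [hVbar]
    refine iSup₂_le fun ν hν => ?_
    exact le_trans (main ν hν).2
      (le_iSup₂ (f := fun ν (_ : ν ∈ Ubar t x) =>
        eexp P (fun ω => φ (τf ν ω, X t x ν (τf ν ω) ω))) ν hν)
end
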